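/- Exploration of the feasible subspace: let B(β) be the mixer built from the sequence of all transpositions of S_N (in some fixed order), and for r ∈ ℕ let B^{(r)}(β) denote the composition of r copies of B(β), each acting on the shared main register H_x but on its own fresh block of auxiliary registers (y, z_1,…,z_n, c), all initialized to |0⟩. Then for all x, x′ ∈ F there exist r ∈ ℕ and β ∈ ℝ and a computational basis state |φ⟩ of the auxiliary registers such that ⟨x′|⊗⟨φ| B^{(r)}(β) (|x⟩ ⊗ |0⟩_aux) ≠ 0; equivalently, Tr[|x′⟩⟨x′| · Tr_aux(B^{(r)}(β)(|x⟩⊗|0⟩_aux)(⟨x|⊗⟨0|_aux)B^{(r)}(β)†)] > 0. -/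

import Mathlib

/-- The action of a permutation `π ∈ S_N` on bit strings:
`π(x) = (x_{π⁻¹(1)}, …, x_{π⁻¹(N)})`. -/
def permBits {N : ℕ} (π : Equiv.Perm (Fin N)) (x : Fin N → Bool) : Fin N → Bool :=
  fun j => x (π.symm j)

/-- Hamming weight of a bit string. -/
def hammingWeight {N : ℕ} (x : Fin N → Bool) : ℕ :=
  (Finset.univ.filter fun j => x j = true).card

/-- The control predicate `χ_π(x) = ⋀_j [¬x_j ∨ ⋀_{l ∈ nbhd(π(j))} ¬x_{π⁻¹(l)}]`. -/
def chi {N : ℕ} (G : SimpleGraph (Fin N)) [DecidableRel G.Adj] (π : Equiv.Perm (Fin N))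
    (x : Fin N → Bool) : Bool :=
  decide (∀ j : Fin N, ¬ x j = true ∨ ∀ l : Fin N, G.Adj (π j) l → ¬ x (π.symm l) = true)

/-- The feasible set `F`: no two adjacent vertices are both marked, and the Hamming
weight equals `k`. -/
def Fset {N : ℕ} (G : SimpleGraph (Fin N)) (k : ℕ) : Set (Fin N → Bool) :=
  {x | (∀ j l : Fin N, G.Adj j l → ¬ (x j = true ∧ x l = true)) ∧ hammingWeight x = k}

/-- One block of auxiliary registers `(y, z_1, …, z_n, c)`. -/
abbrev Aux (N n : ℕ) := (Fin N → Bool) × (Fin n → Bool) × Bool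

/-- The all-zero auxiliary block `|0⟩_y|0⟩_{z_1}⋯|0⟩_{z_n}|0⟩_c`. -/
def auxZero (N n : ℕ) : Aux N n := ((fun _ => false), (fun _ => false), false)

/-- Basis index set for the main register together with `r` fresh blocks of auxiliary
registers. -/
abbrev BigIdx (N n r : ℕ) := (Fin N → Bool) × (Fin r → Aux N n)

/-- The total Hilbert space: the main register `H_x` together with `r` fresh blocks of
auxiliary registers, each consisting of `H_y ⊗ ℂ²_{z_1} ⊗ ⋯ ⊗ ℂ²_{z_n} ⊗ ℂ²_c`. -/
abbrev Hbig (N n r : ℕ) := EuclideanSpace ℂ (BigIdx N n r)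

/-- The linear extension of the basis map `|p⟩ ↦ |g(p)⟩`. -/
noncomputable def basisExtend {ι : Type*} [Fintype ι] [DecidableEq ι] (g : ι → ι) :
    EuclideanSpace ℂ ι →ₗ[ℂ] EuclideanSpace ℂ ι :=
  Matrix.toEuclideanLin (Matrix.of fun q p => if g p = q then (1 : ℂ) else 0)

/-- The basis state `|x⟩`. -/
noncomputable def ket {ι : Type*} [Fintype ι] [DecidableEq ι] (x : ι) : EuclideanSpace ℂ ι :=
  EuclideanSpace.single x 1

/-- The copy unitary `A` of layer `t`: on basis states, `|w⟩_x|y⟩_y ↦ |w⟩_x|y ⊕ w⟩_y`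
(bitwise XOR) acting on the `y` register of the `t`-th auxiliary block, trivially on
everything else. -/
noncomputable def Aop (N n : ℕ) {r : ℕ} (t : Fin r) : Hbig N n r →ₗ[ℂ] Hbig N n r :=
  basisExtend fun p =>
    (p.1,
      Function.update p.2 t
        ((fun j => xor ((p.2 t).1 j) (p.1 j)), (p.2 t).2.1, (p.2 t).2.2))

/-- The operator `V_i` of layer `t`: the linear extension of the basis map sending
`|w⟩_x|y⟩_y|z⟩_{z_i}|c⟩_c ↦ |π_i(w)⟩_x|y⟩_y|1−z⟩_{z_i}|1−c⟩_c` (registers `y`, `z_i`, `c`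
of the `t`-th auxiliary block) when `χ_{π_i}(y) = 1` and `z_i = c`, and fixing the basis
vector otherwise. -/
noncomputable def Vop {N n : ℕ} (G : SimpleGraph (Fin N)) [DecidableRel G.Adj]
    (π : Fin n → Equiv.Perm (Fin N)) {r : ℕ} (t : Fin r) (i : Fin n) :
    Hbig N n r →ₗ[ℂ] Hbig N n r :=
  basisExtend fun p =>
    if chi G (π i) (p.2 t).1 = true ∧ (p.2 t).2.1 i = (p.2 t).2.2 then
      (permBits (π i) p.1,
        Function.update p.2 t
          ((p.2 t).1, Function.update (p.2 t).2.1 i (!(p.2 t).2.1 i), !(p.2 t).2.2))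
    else p

/-- The partial mixer `B_{π_i}(β) = cos β·𝟙 − i sin β·V_i` of layer `t`. -/
noncomputable def Bop {N n : ℕ} (G : SimpleGraph (Fin N)) [DecidableRel G.Adj]
    (π : Fin n → Equiv.Perm (Fin N)) {r : ℕ} (t : Fin r) (i : Fin n) (β : ℝ) :
    Hbig N n r →ₗ[ℂ] Hbig N n r :=
  (Real.cos β : ℂ) • (1 : Module.End ℂ (Hbig N n r)) -
    (Complex.I * (Real.sin β : ℂ)) • Vop G π t i

/-- The mixer `B(β) = B_{π_n}(β) ⋯ B_{π_1}(β) · A` of layer `t`, acting on the shared main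
register and on the `t`-th (fresh) block of auxiliary registers. -/
noncomputable def layerMixer {N n : ℕ} (G : SimpleGraph (Fin N)) [DecidableRel G.Adj]
    (π : Fin n → Equiv.Perm (Fin N)) {r : ℕ} (t : Fin r) (β : ℝ) :
    Hbig N n r →ₗ[ℂ] Hbig N n r :=
  (List.ofFn fun i : Fin n => Bop G π t i β).reverse.prod * Aop N n t

/-- `B^{(r)}(β)`: the composition of `r` copies of the mixer `B(β)`, each acting on the
shared main register but on its own fresh block of auxiliary registers. -/
noncomputable def iterMixer {N n : ℕ} (G : SimpleGraph (Fin N)) [DecidableRel G.Adj]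
    (π : Fin n → Equiv.Perm (Fin N)) (r : ℕ) (β : ℝ) : Hbig N n r →ₗ[ℂ] Hbig N n r :=
  (List.ofFn fun t : Fin r => layerMixer G π t β).reverse.prod

/-! ### generic infrastructure -/

section Generic

variable {ι : Type*} [Fintype ι] [DecidableEq ι]

lemma basisExtend_apply (g : ι → ι) (v : EuclideanSpace ℂ ι) (q : ι) :
    basisExtend g v q = ∑ p ∈ Finset.univ.filter (fun p => g p = q), v p := by
  simp only [basisExtend, Matrix.toEuclideanLin_apply]
  show (Matrix.of fun q p => if g p = q then (1:ℂ) else 0).mulVec (fun p => v p) q = _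
  simp [Matrix.mulVec, dotProduct, Finset.sum_filter, ite_mul]

lemma ket_apply (p q : ι) : (ket p : EuclideanSpace ℂ ι) q = if q = p then 1 else 0 := by
  simp [ket, EuclideanSpace.single_apply]

structure Fac (ι : Type*) where
  g : ι → ι
  k : Option Bool

noncomputable def Fac.toOp (u : ℂ) (f : Fac ι) : EuclideanSpace ℂ ι →ₗ[ℂ] EuclideanSpace ℂ ι :=
  if f.k = none then basisExtend f.g else 1 + u • basisExtend f.g

def Fac.taken (f : Fac ι) : Bool := f.k.getD true

def stepE (p : ι) (f : Fac ι) : ι := if f.taken then f.g p else p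

def runEnd (p : ι) (L : List (Fac ι)) : ι := L.foldl stepE p

def runCount (L : List (Fac ι)) : ℕ := (L.filter fun f => decide (f.k = some true)).length

noncomputable def applyAll (u : ℂ) (L : List (Fac ι)) (v : EuclideanSpace ℂ ι) :
    EuclideanSpace ℂ ι :=
  L.foldl (fun w f => f.toOp u w) v

def Nn (z : ℂ) : Prop := 0 ≤ z.re ∧ z.im = 0

lemma Nn_add {a b : ℂ} (ha : Nn a) (hb : Nn b) : Nn (a + b) := by
  constructor <;> simp [ha.1, ha.2, hb.1, hb.2, add_nonneg ha.1 hb.1]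

lemma Nn_sum {α : Type*} {s : Finset α} {f : α → ℂ} (h : ∀ i ∈ s, Nn (f i)) :
    Nn (∑ i ∈ s, f i) := by
  classical
  induction s using Finset.induction with
  | empty => exact ⟨le_refl 0, rfl⟩
  | insert a s hx ih =>
    rw [Finset.sum_insert hx]
    exact Nn_add (h _ (Finset.mem_insert_self _ _))
      (ih fun i hi => h i (Finset.mem_insert_of_mem hi))

lemma applyAll_append (u : ℂ) (L : List (Fac ι)) (f : Fac ι) (v : EuclideanSpace ℂ ι) :
    applyAll u (L ++ [f]) v = f.toOp u (applyAll u L v) := by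
  simp [applyAll, List.foldl_append]

omit [Fintype ι] [DecidableEq ι] in
lemma runEnd_append (p : ι) (L : List (Fac ι)) (f : Fac ι) :
    runEnd p (L ++ [f]) = stepE (runEnd p L) f := by
  simp [runEnd, List.foldl_append]

lemma main_expand (p₀ : ι) (L : List (Fac ι)) :
    ∃ P : ι → Polynomial ℂ,
      (∀ u q, applyAll u L (ket p₀) q = (P q).eval u) ∧
      (∀ q m, Nn ((P q).coeff m)) ∧
      0 < ((P (runEnd p₀ L)).coeff (runCount L)).re := by
  induction L using List.reverseRecOn with
  | nil =>
    refine ⟨fun q => Polynomial.C ((ket p₀ : EuclideanSpace ℂ ι) q), ?_, ?_, ?_⟩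
    · intro u q; simp [applyAll]
    · intro q m
      rw [Polynomial.coeff_C]
      rcases eq_or_ne m 0 with h | h
      · simp only [h, if_pos rfl, ket_apply]
        refine ⟨?_, ?_⟩ <;> rcases eq_or_ne q p₀ with h' | h' <;> simp [h']
      · simp [h]; exact ⟨le_refl 0, rfl⟩
    · simp [runEnd, runCount, ket_apply]
  | append_singleton L f ih =>
    obtain ⟨P, hev, hnn, hpos⟩ := ih
    set p' := runEnd p₀ L with hp'
    set j := runCount L with hj
    set S : ι → Polynomial ℂ :=
      fun q => ∑ p ∈ Finset.univ.filter (fun p => f.g p = q), P p with hS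
    have hSev : ∀ u q, (S q).eval u = ∑ p ∈ Finset.univ.filter (fun p => f.g p = q),
        (P p).eval u := by
      intro u q; rw [hS]; simp [Polynomial.eval_finset_sum]
    have hScoeff : ∀ q m, (S q).coeff m = ∑ p ∈ Finset.univ.filter (fun p => f.g p = q),
        (P p).coeff m := by
      intro q m; rw [hS]; simp [Polynomial.finset_sum_coeff]
    have hSnn : ∀ q m, Nn ((S q).coeff m) := by
      intro q m; rw [hScoeff]; exact Nn_sum fun p _ => hnn p m
    have hSpos : 0 < ((S (f.g p')).coeff j).re := by
      rw [hScoeff]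
      rw [Complex.re_sum]
      refine Finset.sum_pos' (fun p _ => (hnn p j).1) ⟨p', ?_, hpos⟩
      simp
    rcases hk : f.k with _ | b
    · refine ⟨S, ?_, hSnn, ?_⟩
      · intro u q
        rw [applyAll_append, Fac.toOp, if_pos hk, basisExtend_apply, hSev]
        exact Finset.sum_congr rfl fun p _ => hev u p
      · have htaken : f.taken = true := by simp [Fac.taken, hk]
        rw [runEnd_append, stepE, if_pos htaken, ← hp']
        have : runCount (L ++ [f]) = j := by
          simp [runCount, List.filter_append, hk, hj]
        rw [this]
        exact hSpos
    · refine ⟨fun q => P q + Polynomial.X * S q, ?_, ?_, ?_⟩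
      · intro u q
        rw [applyAll_append, Fac.toOp, if_neg (by simp [hk])]
        simp only [LinearMap.add_apply, Module.End.one_apply, LinearMap.smul_apply]
        have : (u • basisExtend f.g (applyAll u L (ket p₀))) q
            = u * (basisExtend f.g (applyAll u L (ket p₀)) q) := rfl
        rw [PiLp.add_apply, this, basisExtend_apply, Polynomial.eval_add,
          Polynomial.eval_mul, Polynomial.eval_X, hev, hSev]
        congr 1
        · congr 1
          exact Finset.sum_congr rfl fun p _ => hev u p
      · intro q m
        rcases m with _ | m
        · have h0 : (Polynomial.X * S q).coeff 0 = 0 := by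
            rw [Polynomial.mul_coeff_zero]; simp
          rw [Polynomial.coeff_add, h0, add_zero]; exact hnn q 0
        · rw [Polynomial.coeff_add, Polynomial.coeff_X_mul]
          exact Nn_add (hnn q (m+1)) (hSnn q m)
      · rcases b with _ | _
        · have htaken : f.taken = false := by simp [Fac.taken, hk]
          rw [runEnd_append, stepE, if_neg (by simp [htaken]), ← hp']
          have hc : runCount (L ++ [f]) = j := by
            simp [runCount, List.filter_append, hk, hj]
          rw [hc, Polynomial.coeff_add, Complex.add_re]
          have h2 : 0 ≤ ((Polynomial.X * S p').coeff j).re := by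
            rcases j with _ | m
            · simp
            · rw [Polynomial.coeff_X_mul]; exact (hSnn p' m).1
          linarith [hpos]
        · have htaken : f.taken = true := by simp [Fac.taken, hk]
          rw [runEnd_append, stepE, if_pos htaken, ← hp']
          have hc : runCount (L ++ [f]) = j + 1 := by
            simp [runCount, List.filter_append, hk, hj]
          rw [hc, Polynomial.coeff_add, Polynomial.coeff_X_mul, Complex.add_re]
          linarith [(hnn (f.g p') (j+1)).1, hSpos]

end Generic

lemma exists_eval_ne (P : Polynomial ℂ) (hP : P ≠ 0) :
    ∃ t : ℝ, P.eval (-(Complex.I) * t) ≠ 0 := by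
  by_contra h
  push_neg at h
  have hfin : {z : ℂ | P.IsRoot z}.Finite := Polynomial.finite_setOf_isRoot hP
  have hsub : Set.range (fun t : ℝ => -(Complex.I) * (t : ℂ)) ⊆ {z | P.IsRoot z} := by
    rintro z ⟨t, rfl⟩; exact h t
  have hinj : Function.Injective (fun t : ℝ => -(Complex.I) * (t : ℂ)) := by
    intro a b hab
    have : (a : ℂ) = b := mul_left_cancel₀ (by simp [Complex.I_ne_zero]) hab
    exact_mod_cast this
  exact Set.infinite_range_of_injective hinj (hfin.subset hsub)

section Ops

variable {H : Type*} [AddCommGroup H] [Module ℂ H]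

lemma rprod_apply (L : List (H →ₗ[ℂ] H)) (v : H) :
    L.reverse.prod v = L.foldl (fun w f => f w) v := by
  induction L generalizing v with
  | nil => simp
  | cons f L ih =>
    rw [List.reverse_cons, List.prod_append, List.prod_singleton, List.foldl_cons]
    simpa using ih (f v)

lemma list_prod_smul (c : ℂ) (fs : List (H →ₗ[ℂ] H)) :
    (fs.map (fun f => c • f)).prod = c ^ fs.length • fs.prod := by
  induction fs with
  | nil => simp
  | cons f fs ih =>
    rw [List.map_cons, List.prod_cons, ih, List.prod_cons, List.length_cons,
      smul_mul_smul_comm, pow_succ, mul_comm]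

lemma rprod_cons (a : H →ₗ[ℂ] H) (L : List (H →ₗ[ℂ] H)) :
    (a :: L).reverse.prod = L.reverse.prod * a := by
  rw [List.reverse_cons, List.prod_append, List.prod_singleton]

lemma rprod_append (L1 L2 : List (H →ₗ[ℂ] H)) :
    (L1 ++ L2).reverse.prod = L2.reverse.prod * L1.reverse.prod := by
  rw [List.reverse_append, List.prod_append]

lemma rprod_flatten (Ls : List (List (H →ₗ[ℂ] H))) :
    Ls.flatten.reverse.prod = (Ls.map fun l => l.reverse.prod).reverse.prod := by
  induction Ls with
  | nil => simp
  | cons l Ls ih =>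
    rw [List.flatten_cons, rprod_append, ih, List.map_cons, rprod_cons]

end Ops

lemma applyAll_eq_rprod {ι : Type*} [Fintype ι] [DecidableEq ι] (u : ℂ)
    (L : List (Fac ι)) (v : EuclideanSpace ℂ ι) :
    applyAll u L v = ((L.map (Fac.toOp u)).reverse.prod) v := by
  rw [rprod_apply, List.foldl_map]; rfl

lemma foldl_ofFn_state {α β : Type*} {r : ℕ} (F : Fin r → β) (step : α → β → α)
    (St : ℕ → α) (h : ∀ t : Fin r, step (St t) (F t) = St (t + 1)) :
    List.foldl step (St 0) (List.ofFn F) = St r := by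
  induction r generalizing St with
  | zero => simp
  | succ r ih =>
    rw [List.ofFn_succ, List.foldl_cons]
    have h0 : step (St 0) (F 0) = St 1 := by simpa using h 0
    rw [h0]
    exact ih (fun i => F i.succ) (fun m => St (m + 1))
      (fun t => by simpa [Fin.val_succ] using h t.succ)

lemma foldl_untaken {ι : Type*} (L : List (Fac ι)) (h : ∀ f ∈ L, f.taken = false) (p : ι) :
    L.foldl stepE p = p := by
  induction L generalizing p with
  | nil => rfl
  | cons f L ih =>
    rw [List.foldl_cons, stepE, if_neg (by simp [h f List.mem_cons_self])]
    exact ih (fun f hf => h f (List.mem_cons_of_mem _ hf)) p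

lemma foldl_stepE_single {ι : Type*} {m : ℕ} (F : Fin m → Fac ι) (i₀ : Fin m)
    (h0 : (F i₀).taken = true) (h1 : ∀ i, i ≠ i₀ → (F i).taken = false) (p : ι) :
    List.foldl stepE p (List.ofFn F) = (F i₀).g p := by
  induction m generalizing p with
  | zero => exact i₀.elim0
  | succ m ih =>
    rw [List.ofFn_succ, List.foldl_cons]
    rcases eq_or_ne i₀ 0 with rfl | hne
    · rw [stepE, if_pos h0]
      refine foldl_untaken _ (fun f hf => ?_) _
      obtain ⟨i, rfl⟩ := List.mem_ofFn.mp hf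
      exact h1 i.succ (Fin.succ_ne_zero i)
    · obtain ⟨j, rfl⟩ := Fin.exists_succ_eq.mpr hne
      rw [stepE, if_neg (by simp [h1 0 (Ne.symm (Fin.succ_ne_zero j))])]
      exact ih (fun i => F i.succ) j h0
        (fun i hi => h1 i.succ (by simpa [Fin.succ_inj] using hi)) p

lemma chi_of_feasible {N : ℕ} (G : SimpleGraph (Fin N)) [DecidableRel G.Adj]
    (σ : Equiv.Perm (Fin N)) (w : Fin N → Bool)
    (h : ∀ j l : Fin N, G.Adj j l → ¬ (permBits σ w j = true ∧ permBits σ w l = true)) :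
    chi G σ w = true := by
  rw [chi, decide_eq_true_eq]
  intro j
  by_cases hj : w j = true
  · refine Or.inr fun l hadj hl => ?_
    refine h (σ j) l hadj ⟨?_, hl⟩
    simpa [permBits] using hj
  · exact Or.inl hj

section Inst

variable {N n : ℕ} (G : SimpleGraph (Fin N)) [DecidableRel G.Adj]
  (τ : Fin n → Equiv.Perm (Fin N))

def gA {r : ℕ} (t : Fin r) : BigIdx N n r → BigIdx N n r := fun p =>
  (p.1,
    Function.update p.2 t
      ((fun j => xor ((p.2 t).1 j) (p.1 j)), (p.2 t).2.1, (p.2 t).2.2))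

def gV {r : ℕ} (t : Fin r) (i : Fin n) : BigIdx N n r → BigIdx N n r := fun p =>
  if chi G (τ i) (p.2 t).1 = true ∧ (p.2 t).2.1 i = (p.2 t).2.2 then
    (permBits (τ i) p.1,
      Function.update p.2 t
        ((p.2 t).1, Function.update (p.2 t).2.1 i (!(p.2 t).2.1 i), !(p.2 t).2.2))
  else p

lemma Aop_eq {r : ℕ} (t : Fin r) : Aop N n t = basisExtend (gA (N := N) (n := n) t) := rfl

lemma Vop_eq {r : ℕ} (t : Fin r) (i : Fin n) : Vop G τ t i = basisExtend (gV G τ t i) := rfl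

noncomputable def facA {r : ℕ} (t : Fin r) : Fac (BigIdx N n r) := ⟨gA t, none⟩

noncomputable def facB {r : ℕ} (t : Fin r) (i : Fin n) (d : Bool) : Fac (BigIdx N n r) :=
  ⟨gV G τ t i, some d⟩

noncomputable def layerFacs {r : ℕ} (t : Fin r) (D : Fin n → Bool) : List (Fac (BigIdx N n r)) :=
  facA t :: List.ofFn (fun i => facB G τ t i (D i))

noncomputable def bigFacs (r : ℕ) (D : Fin r → Fin n → Bool) : List (Fac (BigIdx N n r)) :=
  (List.ofFn fun t => layerFacs G τ t (D t)).flatten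

lemma toOp_facA {r : ℕ} (t : Fin r) (u : ℂ) :
    Fac.toOp u (facA (N := N) (n := n) t) = Aop N n t := by
  simp only [Fac.toOp, facA, if_pos]
  exact (Aop_eq t).symm

lemma toOp_facB {r : ℕ} (t : Fin r) (i : Fin n) (d : Bool) (u : ℂ) :
    Fac.toOp u (facB G τ t i d) = 1 + u • Vop G τ t i := by
  rw [Fac.toOp, if_neg (by simp [facB]), Vop_eq]; rfl

lemma Bop_eq_smul {r : ℕ} (t : Fin r) (i : Fin n) (β : ℝ) (hc : Real.cos β ≠ 0) (d : Bool) :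
    Bop G τ t i β
      = (Real.cos β : ℂ) • Fac.toOp (-(Complex.I) * (Real.tan β : ℂ)) (facB G τ t i d) := by
  rw [toOp_facB, Bop]
  rw [smul_add, smul_smul]
  have : (Real.cos β : ℂ) * (-(Complex.I) * (Real.tan β : ℂ))
      = -(Complex.I * (Real.sin β : ℂ)) := by
    have h : (Real.cos β : ℂ) * (Real.tan β : ℂ) = (Real.sin β : ℂ) := by
      rw [← Complex.ofReal_mul]
      congr 1
      rw [Real.tan_eq_sin_div_cos]
      field_simp
    calc (Real.cos β : ℂ) * (-(Complex.I) * (Real.tan β : ℂ))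
        = -(Complex.I * ((Real.cos β : ℂ) * (Real.tan β : ℂ))) := by ring
      _ = -(Complex.I * (Real.sin β : ℂ)) := by rw [h]
  rw [this, sub_eq_add_neg, neg_smul]

lemma layerMixer_eq {r : ℕ} (t : Fin r) (β : ℝ) (hc : Real.cos β ≠ 0) (D : Fin n → Bool) :
    layerMixer G τ t β
      = (Real.cos β : ℂ) ^ n •
        ((layerFacs G τ t D).map (Fac.toOp (-(Complex.I) * (Real.tan β : ℂ)))).reverse.prod := by
  set u : ℂ := -(Complex.I) * (Real.tan β : ℂ) with hu
  have h1 : (List.ofFn fun i : Fin n => Bop G τ t i β)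
      = (List.ofFn fun i : Fin n => Fac.toOp u (facB G τ t i (D i))).map
          (fun f => (Real.cos β : ℂ) • f) := by
    rw [List.map_ofFn]
    exact congrArg _ (funext fun i => Bop_eq_smul G τ t i β hc (D i))
  rw [layerMixer, h1, ← List.map_reverse, list_prod_smul]
  rw [List.length_reverse, List.length_ofFn]
  rw [smul_mul_assoc]
  congr 1
  rw [layerFacs, List.map_cons, rprod_cons, List.map_ofFn, toOp_facA]
  rfl

lemma iterMixer_eq (r : ℕ) (β : ℝ) (hc : Real.cos β ≠ 0) (D : Fin r → Fin n → Bool) :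
    iterMixer G τ r β
      = (Real.cos β : ℂ) ^ (r * n) •
        ((bigFacs G τ r D).map (Fac.toOp (-(Complex.I) * (Real.tan β : ℂ)))).reverse.prod := by
  set u : ℂ := -(Complex.I) * (Real.tan β : ℂ) with hu
  have h1 : (List.ofFn fun t : Fin r => layerMixer G τ t β)
      = (List.ofFn fun t : Fin r => ((layerFacs G τ t (D t)).map (Fac.toOp u)).reverse.prod).map
          (fun f => ((Real.cos β : ℂ) ^ n) • f) := by
    rw [List.map_ofFn]
    exact congrArg _ (funext fun t => layerMixer_eq G τ t β hc (D t))
  rw [iterMixer, h1, ← List.map_reverse, list_prod_smul]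
  rw [List.length_reverse, List.length_ofFn, ← pow_mul, mul_comm n r]
  congr 1
  rw [bigFacs, List.map_flatten, rprod_flatten, List.map_ofFn, List.map_ofFn]
  rfl

end Inst


/-- Exploration of the feasible subspace: if the mixer is built from the sequence of all
transpositions of `S_N` (in some fixed order), and the feasible set `F` has the
transposition-connectivity property (any two feasible bit strings are connected by a
sequence of transpositions passing through feasible bit strings, as holds for
FJSP-type feasible sets), then for all `x, x′ ∈ F` there are `r ∈ ℕ`, `β ∈ ℝ` and a
computational basis state `|φ⟩` of the auxiliary registers such that
`⟨x′|⊗⟨φ| B^{(r)}(β) (|x⟩ ⊗ |0⟩_aux) ≠ 0`. -/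
theorem stmt2 {N k n : ℕ} (G : SimpleGraph (Fin N)) [DecidableRel G.Adj]
    (τ : Fin n → Equiv.Perm (Fin N)) (hτinj : Function.Injective τ)
    (hτall : ∀ σ : Equiv.Perm (Fin N), σ.IsSwap ↔ ∃ i, τ i = σ)
    (hconn : ∀ x ∈ Fset G k, ∀ y ∈ Fset G k,
      ∃ L : List (Equiv.Perm (Fin N)),
        (∀ σ ∈ L, σ.IsSwap) ∧
        L.foldl (fun s σ => permBits σ s) x = y ∧
        ∀ L₁, L₁ <+: L → (L₁.foldl (fun s σ => permBits σ s) x) ∈ Fset G k)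
    (x x' : Fin N → Bool) (hx : x ∈ Fset G k) (hx' : x' ∈ Fset G k) :
    ∃ (r : ℕ) (β : ℝ) (φ : Fin r → Aux N n),
      iterMixer G τ r β (ket (x, fun _ => auxZero N n)) (x', φ) ≠ 0 := by
  classical
  obtain ⟨L, hswap, hfold, hpref⟩ := hconn x hx x' hx'
  set s := L.length with hs
  set w : ℕ → (Fin N → Bool) := fun m => (L.take m).foldl (fun sσ σ => permBits σ sσ) x
    with hwdef
  have hws : w s = x' := by
    rw [hwdef]; simp only [hs, List.take_length]; exact hfold
  have hwF : ∀ m, w m ∈ Fset G k := fun m => hpref (L.take m) (List.take_prefix m L)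
  have hstep : ∀ t : Fin s, w (t + 1) = permBits (L.get t) (w t) := by
    intro t
    rw [hwdef]
    simp only
    rw [List.take_succ, List.getElem?_eq_getElem t.2, Option.toList_some, List.foldl_append,
      List.foldl_cons, List.foldl_nil, List.get_eq_getElem]
  have hIs : ∀ t : Fin s, ∃ i, τ i = L.get t := fun t => (hτall _).mp (hswap _ (List.get_mem L t))
  choose i₀ hi₀ using hIs
  set D : Fin s → Fin n → Bool := fun t i => decide (i = i₀ t) with hD
  set φg : Fin s → Aux N n :=
    fun t => (w t, Function.update (fun _ => false) (i₀ t) true, true) with hφ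
  set p₀ : BigIdx N n s := (x, fun _ => auxZero N n) with hp₀
  set St : ℕ → BigIdx N n s :=
    fun m => (w m, fun t' => if (t' : ℕ) < m then φg t' else auxZero N n) with hSt
  have hlayer : ∀ t : Fin s,
      List.foldl stepE (St t) (layerFacs G τ t (D t)) = St (t + 1) := by
    intro t
    rw [layerFacs, List.foldl_cons]
    have hblk : (St t).2 t = auxZero N n := by rw [hSt]; simp
    set a : BigIdx N n s := (w t, Function.update (St t).2 t (w t, fun _ => false, false))
      with ha'
    have hA : stepE (St t) (facA t) = a := by
      show gA t (St t) = a
      rw [gA, ha']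
      refine congrArg₂ Prod.mk rfl (congrArg _ (congrArg₂ Prod.mk ?_ ?_))
      · funext j; simp [hSt, auxZero]
      · simp [hSt, auxZero]
    rw [hA]
    have hsingle : List.foldl stepE a (List.ofFn fun i => facB G τ t i (D t i))
        = gV G τ t (i₀ t) a := by
      have := foldl_stepE_single (fun i => facB G τ t i (D t i)) (i₀ t)
        (by simp [Fac.taken, facB, hD]) (fun i hi => by simp [Fac.taken, facB, hD, hi]) a
      simpa [facB] using this
    rw [hsingle]
    have ha2 : a.2 t = ((w t, fun _ => false, false) : Aux N n) := by
      rw [ha']; simp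
    have hchi : chi G (τ (i₀ t)) (a.2 t).1 = true := by
      rw [ha2, hi₀]
      refine chi_of_feasible G _ _ (fun j l hadj => ?_)
      have := (hwF (t + 1)).1 j l hadj
      rwa [hstep t] at this
    have hcond : chi G (τ (i₀ t)) (a.2 t).1 = true ∧ (a.2 t).2.1 (i₀ t) = (a.2 t).2.2 := by
      refine ⟨hchi, ?_⟩
      rw [ha2]
    rw [gV, if_pos hcond]
    have hfst : permBits (τ (i₀ t)) a.1 = w (t + 1) := by
      rw [ha', hi₀]
      exact (hstep t).symm
    refine congrArg₂ Prod.mk hfst ?_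
    have hblkv : ((a.2 t).1, Function.update (a.2 t).2.1 (i₀ t) (!(a.2 t).2.1 (i₀ t)),
        !(a.2 t).2.2) = φg t := by
      rw [ha2]; simp [hφ]
    rw [hblkv, ha']
    simp only [Function.update_idem]
    funext t'
    rcases eq_or_ne t' t with rfl | hne
    · rw [Function.update_self]
      simp
    · rw [Function.update_of_ne hne]
      have hvne : (t' : ℕ) ≠ (t : ℕ) := fun h => hne (Fin.val_injective h)
      by_cases hlt : (t' : ℕ) < (t : ℕ)
      · simp only [hSt]; rw [if_pos hlt, if_pos (by omega : (t' : ℕ) < (t : ℕ) + 1)]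
      · simp only [hSt]; rw [if_neg hlt, if_neg (by omega : ¬ (t' : ℕ) < (t : ℕ) + 1)]
  have hrun : runEnd p₀ (bigFacs G τ s D) = ((x', fun t' => φg t') : BigIdx N n s) := by
    have h0 : St 0 = p₀ := by
      rw [hSt, hp₀]
      refine congrArg₂ Prod.mk rfl ?_
      funext t'; simp
    have hend : St s = ((x', fun t' => φg t') : BigIdx N n s) := by
      rw [hSt]
      refine congrArg₂ Prod.mk hws ?_
      funext t'; simp [t'.isLt]
    rw [runEnd, bigFacs, List.foldl_flatten, ← h0]
    rw [foldl_ofFn_state (fun t => layerFacs G τ t (D t)) _ St hlayer]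
    exact hend
  obtain ⟨P, hev, hnn, hpos⟩ := main_expand p₀ (bigFacs G τ s D)
  rw [hrun] at hpos
  have hPne : P ((x', fun t' => φg t') : BigIdx N n s) ≠ 0 := by
    intro h
    rw [h] at hpos
    simp at hpos
  obtain ⟨t0, ht0⟩ := exists_eval_ne _ hPne
  have hc : Real.cos (Real.arctan t0) ≠ 0 := ne_of_gt (Real.cos_arctan_pos t0)
  refine ⟨s, Real.arctan t0, fun t' => φg t', ?_⟩
  rw [← hp₀, iterMixer_eq G τ s (Real.arctan t0) hc D, LinearMap.smul_apply,
    ← applyAll_eq_rprod, PiLp.smul_apply, smul_eq_mul, hev]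
  refine mul_ne_zero (pow_ne_zero _ (Complex.ofReal_ne_zero.mpr hc)) ?_
  rw [Real.tan_arctan]
  exact ht0
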